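/- Define u : (0,1] → ℝ by u(r) := cos 1 − cos r + Σ_{i=1}^∞ (−1)^i·(r^{2i} − 1)/((2i)·(2i)!). Then the series converges for every r ∈ (0,1], u(1) = 0, u is twice differentiable on (0,1], and u''(r) + u'(r)/r = cos r for all r ∈ (0,1]. -/

import Mathlib

open Real

noncomputable def F0 (n : ℕ) (x : ℝ) : ℝ :=
  (-1:ℝ) ^ (n + 1) * (x ^ (2 * (n + 1)) - 1) /
    ((2 * (n + 1) : ℕ) * ((2 * (n + 1)).factorial : ℝ))

noncomputable def F1 (n : ℕ) (x : ℝ) : ℝ :=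
  (-1:ℝ) ^ (n + 1) * x ^ (2 * n + 1) / ((2 * (n + 1)).factorial : ℝ)

noncomputable def F2 (n : ℕ) (x : ℝ) : ℝ :=
  (-1:ℝ) ^ (n + 1) * (2 * n + 1) * x ^ (2 * n) / ((2 * (n + 1)).factorial : ℝ)

noncomputable def B (n : ℕ) : ℝ := 4 ^ (n + 1) / ((n + 1).factorial : ℝ)

lemma B_summable : Summable B := by
  have h := Real.summable_pow_div_factorial 4
  exact h.comp_injective Nat.succ_injective

lemma fact_ineq (n : ℕ) :
    ((n + 1).factorial : ℝ) * (2 * n + 2) ≤ ((2 * (n + 1)).factorial : ℝ) := by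
  have h2 : (2 * (n + 1)).factorial = (2 * n + 2) * (2 * n + 1).factorial := by
    rw [show 2 * (n + 1) = (2 * n + 1) + 1 by ring, Nat.factorial_succ]
  have h1 : (n + 1).factorial ≤ (2 * n + 1).factorial := Nat.factorial_le (by omega)
  have : (n + 1).factorial * (2 * n + 2) ≤ (2 * (n + 1)).factorial := by
    rw [h2]; calc (n+1).factorial * (2*n+2) = (2*n+2) * (n+1).factorial := by ring
      _ ≤ (2*n+2) * (2*n+1).factorial := Nat.mul_le_mul_left _ h1
  exact_mod_cast this

lemma factR_pos (n : ℕ) : (0:ℝ) < ((2 * (n + 1)).factorial : ℝ) := by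
  exact_mod_cast (2 * (n + 1)).factorial_pos

lemma F1_bound (n : ℕ) (y : ℝ) (hy : y ∈ Set.Ioo (-2:ℝ) 2) : ‖F1 n y‖ ≤ B n := by
  have hy2 : |y| ≤ 2 := by
    rw [abs_le]; exact ⟨hy.1.le, hy.2.le⟩
  have h1 : ‖F1 n y‖ = |y| ^ (2 * n + 1) / ((2 * (n + 1)).factorial : ℝ) := by
    simp [F1, abs_div, abs_mul, abs_pow, Nat.abs_cast]
  rw [h1, B]
  have hnum : |y| ^ (2 * n + 1) ≤ 4 ^ (n + 1) := by
    calc |y| ^ (2 * n + 1) ≤ 2 ^ (2 * n + 1) :=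
          pow_le_pow_left₀ (abs_nonneg y) hy2 _
      _ ≤ 2 ^ (2 * (n + 1)) := pow_le_pow_right₀ (by norm_num) (by omega)
      _ = 4 ^ (n + 1) := by rw [pow_mul]; norm_num
  have hden : ((n + 1).factorial : ℝ) ≤ ((2 * (n + 1)).factorial : ℝ) := by
    exact_mod_cast Nat.factorial_le (by omega)
  exact div_le_div₀ (by positivity) hnum (by exact_mod_cast (n + 1).factorial_pos) hden

lemma F2_bound (n : ℕ) (y : ℝ) (hy : y ∈ Set.Ioo (-2:ℝ) 2) : ‖F2 n y‖ ≤ B n := by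
  have hy2 : |y| ≤ 2 := by rw [abs_le]; exact ⟨hy.1.le, hy.2.le⟩
  have h1 : ‖F2 n y‖ = (2 * (n:ℝ) + 1) * |y| ^ (2 * n) / ((2 * (n + 1)).factorial : ℝ) := by
    rw [F2, Real.norm_eq_abs, abs_div, abs_mul, abs_mul, abs_pow, abs_pow, abs_neg, abs_one,
      one_pow, one_mul, abs_of_nonneg (show (0:ℝ) ≤ 2 * (n:ℝ) + 1 by positivity),
      abs_of_nonneg (le_of_lt (factR_pos n))]
  rw [h1, B]
  have hnum : |y| ^ (2 * n) ≤ 4 ^ n := by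
    calc |y| ^ (2 * n) ≤ 2 ^ (2 * n) := by gcongr
      _ = 4 ^ n := by rw [pow_mul]; norm_num
  have step : (2 * (n:ℝ) + 1) * |y| ^ (2 * n) ≤ (2 * n + 1) * 4 ^ n := by
    gcongr
  have key : (2 * (n:ℝ) + 1) * 4 ^ n / ((2 * (n + 1)).factorial : ℝ)
      ≤ 4 ^ (n + 1) / ((n + 1).factorial : ℝ) := by
    rw [div_le_div_iff₀ (factR_pos n) (by exact_mod_cast (n+1).factorial_pos), pow_succ]
    have hf := fact_ineq n
    have h4 : (0:ℝ) < 4 ^ n := by positivity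
    have hfp : (0:ℝ) < ((n + 1).factorial : ℝ) := by exact_mod_cast (n+1).factorial_pos
    nlinarith [mul_le_mul_of_nonneg_left hf (le_of_lt h4), mul_pos h4 hfp]
  calc (2 * (n:ℝ) + 1) * |y| ^ (2 * n) / ((2 * (n + 1)).factorial : ℝ)
      ≤ (2 * (n:ℝ) + 1) * 4 ^ n / ((2 * (n + 1)).factorial : ℝ) := by
        gcongr
    _ ≤ 4 ^ (n + 1) / ((n + 1).factorial : ℝ) := key

lemma F0_hasDeriv (n : ℕ) (x : ℝ) : HasDerivAt (F0 n) (F1 n x) x := by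
  have h := (((hasDerivAt_pow (2 * (n + 1)) x).sub_const 1).const_mul
      ((-1:ℝ) ^ (n + 1))).div_const ((2 * (n + 1) : ℕ) * ((2 * (n + 1)).factorial : ℝ))
  refine h.congr_deriv (Eq.symm ?_)
  have hfp := factR_pos n
  simp only [F1]
  rw [show 2 * (n + 1) - 1 = 2 * n + 1 by omega]
  push_cast
  field_simp

lemma F1_hasDeriv (n : ℕ) (x : ℝ) : HasDerivAt (F1 n) (F2 n x) x := by
  have h := ((hasDerivAt_pow (2 * n + 1) x).const_mul
      ((-1:ℝ) ^ (n + 1))).div_const ((2 * (n + 1)).factorial : ℝ)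
  refine h.congr_deriv (Eq.symm ?_)
  simp only [F2]
  rw [show 2 * n + 1 - 1 = 2 * n by omega]
  push_cast
  ring

theorem stmt16 (u : ℝ → ℝ)
    (hu : ∀ r : ℝ, u r = cos 1 - cos r +
      ∑' i : ℕ, (-1:ℝ) ^ (i + 1) * (r ^ (2 * (i + 1)) - 1) /
        ((2 * (i + 1) : ℕ) * ((2 * (i + 1)).factorial : ℝ))) :
    (∀ r ∈ Set.Ioc (0:ℝ) 1,
      Summable (fun i : ℕ => (-1:ℝ) ^ (i + 1) * (r ^ (2 * (i + 1)) - 1) /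
        ((2 * (i + 1) : ℕ) * ((2 * (i + 1)).factorial : ℝ)))) ∧
    u 1 = 0 ∧
    ∃ u' u'' : ℝ → ℝ, ∀ r ∈ Set.Ioc (0:ℝ) 1,
      HasDerivAt u (u' r) r ∧ HasDerivAt u' (u'' r) r ∧
      u'' r + u' r / r = cos r := by
  have hueq : u = fun r => cos 1 - cos r + ∑' i : ℕ, F0 i r := by
    funext r; rw [hu r]; rfl
  have hF0_sum : ∀ r ∈ Set.Ioc (0:ℝ) 1, Summable (fun i => F0 i r) := by
    intro r hr
    apply Summable.of_norm_bounded B_summable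
    intro n
    have hr1 : 0 < r := hr.1
    have hr2 : r ≤ 1 := hr.2
    have hpow : 0 < r ^ (2 * (n + 1)) := pow_pos hr1 _
    have hpow1 : r ^ (2 * (n + 1)) ≤ 1 := pow_le_one₀ hr1.le hr2
    have hden_pos : (0:ℝ) < (2 * (n + 1) : ℕ) * ((2 * (n + 1)).factorial : ℝ) := by
      have := factR_pos n
      have h2 : (0:ℝ) < (2 * (n + 1) : ℕ) := by exact_mod_cast Nat.succ_le_of_lt (by omega)
      positivity
    have h1 : ‖F0 n r‖ = |r ^ (2 * (n + 1)) - 1| / ((2 * (n + 1) : ℕ) * ((2 * (n + 1)).factorial : ℝ)) := by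
      rw [F0, Real.norm_eq_abs, abs_div, abs_mul, abs_pow, abs_neg, abs_one, one_pow, one_mul,
        abs_of_pos hden_pos]
    rw [h1, B]
    have hnum : |r ^ (2 * (n + 1)) - 1| ≤ 1 := by rw [abs_le]; constructor <;> nlinarith
    have hden : ((n + 1).factorial : ℝ) ≤ (2 * (n + 1) : ℕ) * ((2 * (n + 1)).factorial : ℝ) := by
      have ha : ((n + 1).factorial : ℝ) ≤ ((2 * (n + 1)).factorial : ℝ) := by
        exact_mod_cast Nat.factorial_le (by omega)
      have hb : (1:ℝ) ≤ (2 * (n + 1) : ℕ) := by exact_mod_cast Nat.one_le_iff_ne_zero.2 (by omega)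
      nlinarith [factR_pos n]
    calc |r ^ (2 * (n + 1)) - 1| / ((2 * (n + 1) : ℕ) * ((2 * (n + 1)).factorial : ℝ))
        ≤ 1 / ((n + 1).factorial : ℝ) :=
          div_le_div₀ (by norm_num) hnum (by exact_mod_cast (n + 1).factorial_pos) hden
      _ ≤ 4 ^ (n + 1) / ((n + 1).factorial : ℝ) := by
          gcongr
          exact one_le_pow₀ (by norm_num)
  refine ⟨hF0_sum, ?_, ?_⟩
  · rw [hu 1]
    have : ∀ i : ℕ, (-1:ℝ) ^ (i + 1) * ((1:ℝ) ^ (2 * (i + 1)) - 1) /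
        ((2 * (i + 1) : ℕ) * ((2 * (i + 1)).factorial : ℝ)) = 0 := by
      intro i; simp
    rw [tsum_congr this]
    simp
  · -- derivatives
    set t : Set ℝ := Set.Ioo (-2) 2 with ht
    have ht_open : IsOpen t := isOpen_Ioo
    have ht_conn : IsPreconnected t := (convex_Ioo _ _).isPreconnected
    have h0t : (0:ℝ) ∈ t := by constructor <;> norm_num
    have hF10 : Summable (fun n => F1 n 0) := by
      have : ∀ n, F1 n 0 = 0 := by intro n; simp [F1]
      simp only [this]; exact summable_zero
    have h1t : (1:ℝ) ∈ t := by constructor <;> norm_num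
    have hF01 : Summable (fun n => F0 n 1) := by
      have : ∀ n, F0 n 1 = 0 := by intro n; simp [F0]
      simp only [this]; exact summable_zero
    have hderiv_tsum : ∀ y ∈ t, HasDerivAt (fun z => ∑' n, F0 n z) (∑' n, F1 n y) y :=
      fun y hy => hasDerivAt_tsum_of_isPreconnected B_summable ht_open ht_conn
        (fun n x _ => F0_hasDeriv n x) (fun n x hx => F1_bound n x hx) h1t hF01 hy
    have hderiv_tsum1 : ∀ y ∈ t, HasDerivAt (fun z => ∑' n, F1 n z) (∑' n, F2 n y) y :=
      fun y hy => hasDerivAt_tsum_of_isPreconnected B_summable ht_open ht_conn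
        (fun n x _ => F1_hasDeriv n x) (fun n x hx => F2_bound n x hx) h0t hF10 hy
    refine ⟨fun x => sin x + ∑' n, F1 n x, fun x => cos x + ∑' n, F2 n x, ?_⟩
    intro r hr
    have hrt : r ∈ t := ⟨by linarith [hr.1], by linarith [hr.2]⟩
    have hr0 : (0:ℝ) < r := hr.1
    constructor
    · -- HasDerivAt u
      rw [hueq]
      have h1 : HasDerivAt (fun x : ℝ => cos 1 - cos x) (sin r) r := by
        have := (hasDerivAt_cos r).const_sub (cos 1)
        simpa using this
      exact h1.add (hderiv_tsum r hrt)
    constructor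
    · -- HasDerivAt u'
      exact (hasDerivAt_sin r).add (hderiv_tsum1 r hrt)
    · -- the ODE identity
      have hS1 : Summable (fun n => F1 n r) :=
        Summable.of_norm_bounded B_summable (fun n => F1_bound n r hrt)
      have hS2 : Summable (fun n => F2 n r) :=
        Summable.of_norm_bounded B_summable (fun n => F2_bound n r hrt)
      have hsum : HasSum (fun n => r * F2 n r + F1 n r)
          (r * (∑' n, F2 n r) + ∑' n, F1 n r) :=
        (hS2.hasSum.mul_left r).add hS1.hasSum
      have hterm : ∀ n : ℕ, r * F2 n r + F1 n r
          = -((-1:ℝ) ^ n * r ^ (2 * n + 1) / ((2 * n + 1).factorial : ℝ)) := by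
        intro n
        have hfac : ((2 * (n + 1)).factorial : ℝ) = (2 * n + 2) * ((2 * n + 1).factorial : ℝ) := by
          rw [show 2 * (n + 1) = (2 * n + 1) + 1 by ring, Nat.factorial_succ]
          push_cast; ring
        have hfp : ((2 * n + 1).factorial : ℝ) ≠ 0 := by
          exact_mod_cast (2 * n + 1).factorial_ne_zero
        simp only [F1, F2, hfac]
        have h22 : (2 * (n:ℝ) + 2) ≠ 0 := by positivity
        field_simp
        ring
      have hsin : HasSum (fun n => r * F2 n r + F1 n r) (-sin r) := by
        have := (Real.hasSum_sin r).neg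
        convert this using 2 with n
        · rfl
        rw [hterm n]
      have hkey : r * (∑' n, F2 n r) + ∑' n, F1 n r = -sin r := hsum.unique hsin
      have hrne : r ≠ 0 := ne_of_gt hr0
      field_simp
      nlinarith [hkey]
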